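/- Let $A \in \mathbb{C}^{n\times n}$, $B \in \mathbb{C}^{n\times m}$, $C \in \mathbb{C}^{p\times n}$, $\tau > 0$, $\hat{\lambda}_i \in \mathbb{C}$ with $-\hat{\lambda}_i I - A$ invertible, and $\hat{r}_i \in \mathbb{C}^{m}$. Set $B_\tau = \exp(\tau A)B$, $G_{\mathcal{T}}(s) = C(sI-A)^{-1}[B,\; -B_\tau]$, $\tilde{r}_i = \begin{bmatrix}\hat{r}_i \\ e^{\hat{\lambda}_i\tau}\hat{r}_i\end{bmatrix}$, $G(s) = C(sI-A)^{-1}B$, $G_\tau(s) = -e^{-s\tau}C(sI-A)^{-1}\exp(\tau A)B$, and $T_\tau(s) = G_\tau(s) + G(s)$. Then $G_{\mathcal{T}}(-\hat{\lambda}_i)\tilde{r}_i = T_\tau(-\hat{\lambda}_i)\hat{r}_i$. Consequently, for a reduced model $(\hat{A},\hat{B},\hat{C})$ with the analogous definitions $\hat{G}_{\mathcal{T}}$, $\hat{T}_\tau$, the tangential interpolation condition $G_{\mathcal{T}}(-\hat{\lambda}_i)\tilde{r}_i = \hat{G}_{\mathcal{T}}(-\hat{\lambda}_i)\tilde{r}_i$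 holds if and only if $T_\tau(-\hat{\lambda}_i)\hat{r}_i = \hat{T}_\tau(-\hat{\lambda}_i)\hat{r}_i$ holds. -/

import Mathlib

open Matrix NormedSpace

/-- **Theorem 3, part 2.** The tangential interpolation condition (b31) used in
time-limited pseudo-optimal reduction is equivalent to the right tangential
interpolation optimality condition (g3): one has
`G_T(−λ̂ᵢ) r̃ᵢ = T_τ(−λ̂ᵢ) r̂ᵢ`, and consequently, for any reduced model with the
analogous definitions, `G_T(−λ̂ᵢ) r̃ᵢ = Ĝ_T(−λ̂ᵢ) r̃ᵢ ↔ T_τ(−λ̂ᵢ) r̂ᵢ = T̂_τ(−λ̂ᵢ) r̂ᵢ`. -/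

lemma key_col_mulVec {q n m : ℕ} (M : Matrix (Fin q) (Fin n) ℂ)
    (B E : Matrix (Fin n) (Fin m) ℂ) (c : ℂ) (r : Fin m → ℂ) :
    (M * Matrix.fromCols B (-E)).mulVec
      (Sum.elim r (fun j => c * r j)) =
    (-(c • (M * E)) + M * B).mulVec r := by
  have h : (fun j => c * r j) = c • r := rfl
  rw [h, Matrix.mul_fromCols, Matrix.fromCols_mulVec_sumElim,
    Matrix.mulVec_smul, Matrix.add_mulVec, Matrix.neg_mulVec,
    Matrix.smul_mulVec, Matrix.mul_neg, Matrix.neg_mulVec, smul_neg]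
  abel

theorem time_limited_interp_b31_iff_g3
    {n m p : ℕ}
    (A : Matrix (Fin n) (Fin n) ℂ)
    (B : Matrix (Fin n) (Fin m) ℂ)
    (C : Matrix (Fin p) (Fin n) ℂ)
    (τ : ℝ) (hτ : 0 < τ)
    (lam : ℂ) (hinvA : IsUnit ((-lam) • (1 : Matrix (Fin n) (Fin n) ℂ) - A))
    (rhat : Fin m → ℂ)
    (Btau : Matrix (Fin n) (Fin m) ℂ) (hBtau : Btau = exp ((τ : ℂ) • A) * B)
    (GT : ℂ → Matrix (Fin p) (Fin m ⊕ Fin m) ℂ)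
    (hGT : ∀ s : ℂ, GT s =
      C * (s • (1 : Matrix (Fin n) (Fin n) ℂ) - A)⁻¹ * Matrix.fromCols B (-Btau))
    (rtilde : (Fin m ⊕ Fin m) → ℂ)
    (hrtilde : rtilde = Sum.elim rhat (fun j => Complex.exp (lam * τ) * rhat j))
    (G : ℂ → Matrix (Fin p) (Fin m) ℂ)
    (hG : ∀ s : ℂ, G s = C * (s • (1 : Matrix (Fin n) (Fin n) ℂ) - A)⁻¹ * B)
    (Gtau : ℂ → Matrix (Fin p) (Fin m) ℂ)
    (hGtau : ∀ s : ℂ, Gtau s = -(Complex.exp (-(s * τ)) •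
      (C * (s • (1 : Matrix (Fin n) (Fin n) ℂ) - A)⁻¹ * (exp ((τ : ℂ) • A) * B))))
    (Ttau : ℂ → Matrix (Fin p) (Fin m) ℂ)
    (hTtau : ∀ s : ℂ, Ttau s = Gtau s + G s) :
    (GT (-lam)).mulVec rtilde = (Ttau (-lam)).mulVec rhat ∧
      ∀ (r : ℕ) (Ahat : Matrix (Fin r) (Fin r) ℂ) (Bhat : Matrix (Fin r) (Fin m) ℂ)
        (Chat : Matrix (Fin p) (Fin r) ℂ)
        (GThat : Matrix (Fin p) (Fin m ⊕ Fin m) ℂ)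
        (Tthat : Matrix (Fin p) (Fin m) ℂ),
        GThat = Chat * ((-lam) • (1 : Matrix (Fin r) (Fin r) ℂ) - Ahat)⁻¹ *
            Matrix.fromCols Bhat (-(exp ((τ : ℂ) • Ahat) * Bhat)) →
        Tthat = -(Complex.exp (-((-lam) * τ)) •
            (Chat * ((-lam) • (1 : Matrix (Fin r) (Fin r) ℂ) - Ahat)⁻¹ *
              (exp ((τ : ℂ) • Ahat) * Bhat))) +
            Chat * ((-lam) • (1 : Matrix (Fin r) (Fin r) ℂ) - Ahat)⁻¹ * Bhat →
        ((GT (-lam)).mulVec rtilde = GThat.mulVec rtilde ↔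
          (Ttau (-lam)).mulVec rhat = Tthat.mulVec rhat) := by

  have hexp : Complex.exp (-(-lam * ↑τ)) = Complex.exp (lam * ↑τ) := by ring_nf
  have h1 : (GT (-lam)).mulVec rtilde = (Ttau (-lam)).mulVec rhat := by
    rw [hGT, hrtilde, hBtau, hTtau, hGtau, hG, hexp]
    have := key_col_mulVec (C * ((-lam) • (1 : Matrix (Fin n) (Fin n) ℂ) - A)⁻¹)
      B (exp ((τ : ℂ) • A) * B) (Complex.exp (lam * ↑τ)) rhat
    simpa [Matrix.mul_assoc, neg_smul] using this
  refine ⟨h1, ?_⟩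
  intro r Ahat Bhat Chat GThat Tthat hGThat hTthat
  have h2 : GThat.mulVec rtilde = Tthat.mulVec rhat := by
    rw [hGThat, hrtilde, hTthat, hexp]
    have := key_col_mulVec (Chat * ((-lam) • (1 : Matrix (Fin r) (Fin r) ℂ) - Ahat)⁻¹)
      Bhat (exp ((τ : ℂ) • Ahat) * Bhat) (Complex.exp (lam * ↑τ)) rhat
    simpa [Matrix.mul_assoc, neg_smul] using this
  rw [h1, h2]
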